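/- Let h > 0 and let λ₁, λ₂ be real numbers with λ₁ ≠ λ₂ and λ₁ ≠ 0. Set φ = ((λ₂²h − λ₁²h + 2λ₁)e^{λ₁h} − 2λ₁e^{λ₂h})/(λ₁ − λ₂)²; assume φ ≠ 0; set ψ = ((2 − λ₁h)e^{λ₁h} − λ₁φ)/2 and θ = (he^{λ₁h} − φ)/(2λ₁φ²). Then: φ + 2λ₁θφ² = he^{λ₁h}; ψ + φλ₁ + θφ²λ₁² = e^{λ₁h}; and ψ + φλ₂ + θφ²λ₂² = e^{λ₂h}. -/

import Mathlib

/-- For eigenvalues `λ₁, λ₁, λ₂` (`λ₁ ≠ λ₂`, `λ₁ ≠ 0`), the parameters of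
the explicit scheme given by (eeds4) satisfy the exactness conditions (eeds2). -/
theorem explicit_params_double_eigenvalue
    (h l1 l2 : ℝ) (hh : 0 < h) (h12 : l1 ≠ l2) (h1 : l1 ≠ 0)
    (φ ψ θ : ℝ)
    (hφ : φ = ((l2 ^ 2 * h - l1 ^ 2 * h + 2 * l1) * Real.exp (l1 * h)
      - 2 * l1 * Real.exp (l2 * h)) / (l1 - l2) ^ 2)
    (hφne : φ ≠ 0)
    (hψ : ψ = ((2 - l1 * h) * Real.exp (l1 * h) - l1 * φ) / 2)
    (hθ : θ = (h * Real.exp (l1 * h) - φ) / (2 * l1 * φ ^ 2)) :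
    φ + 2 * l1 * θ * φ ^ 2 = h * Real.exp (l1 * h) ∧
    ψ + φ * l1 + θ * φ ^ 2 * l1 ^ 2 = Real.exp (l1 * h) ∧
    ψ + φ * l2 + θ * φ ^ 2 * l2 ^ 2 = Real.exp (l2 * h) := by
  have hd : (l1 - l2) ≠ 0 := sub_ne_zero.mpr h12
  have hθφ : θ * φ ^ 2 = (h * Real.exp (l1 * h) - φ) / (2 * l1) := by
    rw [hθ]; field_simp
  refine ⟨?_, ?_, ?_⟩
  · rw [show 2 * l1 * θ * φ ^ 2 = 2 * l1 * (θ * φ ^ 2) from by ring, hθφ]; field_simp; ring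
  · rw [hθφ, hψ]; field_simp; ring
  · rw [hθφ, hψ, hφ]; field_simp; ring
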